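/- Let H : Set → Set be a functor preserving finite products. Then either H preserves finite limits, or H is naturally isomorphic to the functor C₀₁ defined by C₀₁(∅) = ∅ and C₀₁(X) = a one-element set for all X ≠ ∅. -/

import Mathlib

open CategoryTheory Limits

/-- The set functor sending `∅` to `∅` and every nonempty set to a one-element set. -/
def C01 : Type u ⥤ Type u where
  obj X := ULift.{u} (PLift (Nonempty X))
  map f := TypeCat.ofHom (fun h => ⟨⟨h.down.down.map f⟩⟩)
  map_id := by intro X; ext x; exact Subsingleton.elim _ _
  map_comp := by intro X Y Z f g; ext x; exact Subsingleton.elim _ _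

universe u

namespace Stmt17Aux

variable (H : Type u ⥤ Type u)

/-- The two points of `ULift Bool`. -/
def tmap : (PUnit : Type u) ⟶ ULift Bool := TypeCat.ofHom fun _ => ⟨true⟩
def fmap : (PUnit : Type u) ⟶ ULift Bool := TypeCat.ofHom fun _ => ⟨false⟩

lemma map_comp_apply' {X Y Z : Type u} (f : X ⟶ Y) (g : Y ⟶ Z) (z : H.obj X) :
    H.map g (H.map f z) = H.map (TypeCat.ofHom fun x => g (f x)) z :=
  (FunctorToTypes.map_comp_apply H f g z).symm

lemma map_pair_ext
    (hprod : ∀ X Y : Type u, Function.Bijective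
      (fun z : H.obj (X × Y) =>
        (H.map (X := X × Y) (Y := X) (TypeCat.ofHom Prod.fst) z, H.map (X := X × Y) (Y := Y) (TypeCat.ofHom Prod.snd) z)))
    {W Y Z : Type u} (p q : W ⟶ Y × Z) (z : H.obj W)
    (h1 : H.map (show W ⟶ Y from TypeCat.ofHom fun w => (p w).1) z = H.map (TypeCat.ofHom fun w => (q w).1) z)
    (h2 : H.map (show W ⟶ Z from TypeCat.ofHom fun w => (p w).2) z = H.map (TypeCat.ofHom fun w => (q w).2) z) :
    H.map p z = H.map q z := by
  apply (hprod Y Z).injective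
  dsimp only
  rw [map_comp_apply', map_comp_apply', map_comp_apply', map_comp_apply']
  exact Prod.ext h1 h2

lemma const_factor {X Y : Type u} (c : Y) (z : H.obj X) :
    H.map (TypeCat.ofHom (fun _ => c) : X ⟶ Y) z
      = H.map (TypeCat.ofHom (fun _ => c) : (PUnit : Type u) ⟶ Y)
          (H.map (TypeCat.ofHom (fun _ => PUnit.unit) : X ⟶ (PUnit : Type u)) z) :=
  (map_comp_apply' H (TypeCat.ofHom fun _ => PUnit.unit) (TypeCat.ofHom fun _ => c) z).symm


section CaseA

variable (hprod : ∀ X Y : Type u, Function.Bijective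
      (fun z : H.obj (X × Y) =>
        (H.map (X := X × Y) (Y := X) (TypeCat.ofHom Prod.fst) z, H.map (X := X × Y) (Y := Y) (TypeCat.ofHom Prod.snd) z)))
variable (hone : Nonempty (H.obj PUnit) ∧ Subsingleton (H.obj PUnit))

set_option linter.unusedSectionVars false

include hprod hone

lemma const_true_eq_const_false (hab : H.map (tmap) = H.map (fmap))
    {X : Type u} (z : H.obj X) :
    H.map (TypeCat.ofHom (fun _ => ⟨true⟩) : X ⟶ ULift Bool) z
      = H.map (TypeCat.ofHom (fun _ => ⟨false⟩) : X ⟶ ULift Bool) z := by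
  rw [const_factor H (ULift.up true) z, const_factor H (ULift.up false) z]
  exact ConcreteCategory.congr_hom hab _

lemma hom_const (hab : H.map (tmap) = H.map (fmap))
    {X Y : Type u} (f g : X ⟶ Y) : H.map f = H.map g := by
  refine ConcreteCategory.hom_ext _ _ fun z => ?_
  let h : X × ULift Bool ⟶ Y := TypeCat.ofHom fun p => match p.2.down with
    | true => f p.1
    | false => g p.1
  have h1 : H.map (TypeCat.ofHom (fun x => (x, ⟨true⟩)) : X ⟶ X × ULift Bool) z
      = H.map (TypeCat.ofHom (fun x => (x, ⟨false⟩)) : X ⟶ X × ULift Bool) z := by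
    apply map_pair_ext H hprod
    · rfl
    · exact const_true_eq_const_false H hprod hone hab z
  calc H.map f z
      = H.map h (H.map (TypeCat.ofHom (fun x => (x, ⟨true⟩)) : X ⟶ X × ULift Bool) z) :=
        (map_comp_apply' H (TypeCat.ofHom fun x => (x, (⟨true⟩ : ULift Bool))) h z).symm
    _ = H.map h (H.map (TypeCat.ofHom (fun x => (x, ⟨false⟩)) : X ⟶ X × ULift Bool) z) := by rw [h1]
    _ = H.map g z := map_comp_apply' H (TypeCat.ofHom fun x => (x, ⟨false⟩)) h z

lemma subsingleton_of_nonempty (hab : H.map (tmap) = H.map (fmap))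
    {X : Type u} (hX : Nonempty X) : Subsingleton (H.obj X) := by
  obtain ⟨x0⟩ := hX
  constructor
  intro z z'
  have hc : H.map (𝟙 X) = H.map (TypeCat.ofHom (fun _ => x0) : X ⟶ X) := hom_const H hprod hone hab _ _
  have hz : ∀ w : H.obj X, w = H.map (TypeCat.ofHom (fun _ => x0) : (PUnit : Type u) ⟶ X)
      (H.map (TypeCat.ofHom (fun _ => PUnit.unit) : X ⟶ (PUnit : Type u)) w) := by
    intro w
    rw [← const_factor H x0 w, ← hc, FunctorToTypes.map_id_apply]
  rw [hz z, hz z', hone.2.elim (H.map _ z) (H.map _ z')]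

lemma nonempty_of_nonempty {X : Type u} (hX : Nonempty X) : Nonempty (H.obj X) := by
  obtain ⟨x0⟩ := hX
  exact ⟨H.map (TypeCat.ofHom (fun _ => x0) : (PUnit : Type u) ⟶ X) (Classical.choice hone.1)⟩

lemma subsingleton_of_isEmpty {X : Type u} (hX : IsEmpty X) :
    Subsingleton (H.obj X) := by
  constructor
  intro z z'
  obtain ⟨w, hw⟩ := (hprod X X).surjective (z, z')
  have hfs : (Prod.fst : X × X → X) = Prod.snd := funext fun p => hX.elim p.1
  have h1 : H.map (X := X × X) (Y := X) (TypeCat.ofHom Prod.fst) w = z := congrArg Prod.fst hw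
  have h2 : H.map (X := X × X) (Y := X) (TypeCat.ofHom Prod.snd) w = z' := congrArg Prod.snd hw
  rw [← h1, ← h2, hfs]

end CaseA


section CaseB

lemma tmap_eq_fmap_of_point {w : H.obj PUnit}
    (hone : Nonempty (H.obj PUnit) ∧ Subsingleton (H.obj PUnit))
    (h : H.map (tmap) w = H.map (fmap) w) : H.map (tmap) = H.map (fmap) := by
  refine ConcreteCategory.hom_ext _ _ fun w' => ?_
  rw [hone.2.elim w' w, h]

lemma isEmpty_obj (hone : Nonempty (H.obj PUnit) ∧ Subsingleton (H.obj PUnit))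
    (hab : H.map (tmap) ≠ H.map (fmap)) {X : Type u} (hX : IsEmpty X) :
    IsEmpty (H.obj X) := by
  constructor
  intro z
  apply hab
  apply tmap_eq_fmap_of_point H hone (w := H.map (TypeCat.ofHom (fun _ => PUnit.unit) : X ⟶ (PUnit : Type u)) z)
  show H.map (TypeCat.ofHom (fun _ => ULift.up true) : (PUnit : Type u) ⟶ ULift Bool) _
      = H.map (TypeCat.ofHom (fun _ => ULift.up false) : (PUnit : Type u) ⟶ ULift Bool) _
  rw [← const_factor H (ULift.up true) z, ← const_factor H (ULift.up false) z]
  have : (TypeCat.ofHom (fun _ => ⟨true⟩) : X ⟶ ULift Bool) = TypeCat.ofHom (fun _ => ⟨false⟩) :=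
    ConcreteCategory.hom_ext _ _ fun x => hX.elim x
  rw [this]

open Classical in
lemma chi_eq_true (hprod : ∀ X Y : Type u, Function.Bijective
      (fun z : H.obj (X × Y) =>
        (H.map (X := X × Y) (Y := X) (TypeCat.ofHom Prod.fst) z, H.map (X := X × Y) (Y := Y) (TypeCat.ofHom Prod.snd) z)))
    {X Y : Type u} (f g : X ⟶ Y) (z : H.obj X) (hz : H.map f z = H.map g z) :
    H.map (TypeCat.ofHom (fun x => if f x = g x then ⟨true⟩ else ⟨false⟩) : X ⟶ ULift Bool) z
      = H.map (TypeCat.ofHom (fun _ => ⟨true⟩) : X ⟶ ULift Bool) z := by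
  let p : Y × Y ⟶ ULift Bool := TypeCat.ofHom fun q => if q.1 = q.2 then ⟨true⟩ else ⟨false⟩
  have hp : H.map (TypeCat.ofHom (fun x => (f x, g x)) : X ⟶ Y × Y) z
      = H.map (TypeCat.ofHom (fun x => (f x, f x)) : X ⟶ Y × Y) z :=
    map_pair_ext H hprod _ _ z rfl hz.symm
  calc H.map (TypeCat.ofHom (fun x => if f x = g x then ⟨true⟩ else ⟨false⟩) : X ⟶ ULift Bool) z
      = H.map p (H.map (TypeCat.ofHom (fun x => (f x, g x)) : X ⟶ Y × Y) z) :=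
        (map_comp_apply' H (TypeCat.ofHom fun x => (f x, g x)) p z).symm
    _ = H.map p (H.map (TypeCat.ofHom (fun x => (f x, f x)) : X ⟶ Y × Y) z) := by rw [hp]
    _ = H.map (TypeCat.ofHom (fun x => p (f x, f x)) : X ⟶ ULift Bool) z :=
        map_comp_apply' H (TypeCat.ofHom fun x => (f x, f x)) p z
    _ = H.map (TypeCat.ofHom (fun _ => ⟨true⟩) : X ⟶ ULift Bool) z := by
        have : (TypeCat.ofHom (fun x => p (f x, f x)) : X ⟶ ULift Bool)
            = (TypeCat.ofHom (fun _ => ⟨true⟩) : X ⟶ ULift Bool) := ConcreteCategory.hom_ext _ _ fun x => by simp [p]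
        rw [this]

open Classical in
lemma exists_unique_preimage (hprod : ∀ X Y : Type u, Function.Bijective
      (fun z : H.obj (X × Y) =>
        (H.map (X := X × Y) (Y := X) (TypeCat.ofHom Prod.fst) z, H.map (X := X × Y) (Y := Y) (TypeCat.ofHom Prod.snd) z)))
    (hone : Nonempty (H.obj PUnit) ∧ Subsingleton (H.obj PUnit))
    (hab : H.map (tmap) ≠ H.map (fmap)) {X Y : Type u} (f g : X ⟶ Y)
    (z : H.obj X) (hz : H.map f z = H.map g z) :
    ∃! e : H.obj {x : X // f x = g x},
      H.map (TypeCat.ofHom (Subtype.val) : {x : X // f x = g x} ⟶ X) e = z := by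
  let E := {x : X // f x = g x}
  let χ : X ⟶ ULift Bool := TypeCat.ofHom fun x => if f x = g x then ⟨true⟩ else ⟨false⟩
  have hχ : H.map χ z = H.map (TypeCat.ofHom (fun _ => ⟨true⟩) : X ⟶ ULift Bool) z :=
    chi_eq_true H hprod f g z hz
  by_cases hEn : Nonempty E
  · obtain ⟨e0⟩ := hEn
    let r : X ⟶ E := TypeCat.ofHom fun x => if h : f x = g x then ⟨x, h⟩ else e0
    have hri : ∀ e : E, r e.val = e := by
      intro e
      simp only [r, TypeCat.ofHom_apply, dif_pos e.prop, Subtype.coe_eta]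
    have key : H.map (TypeCat.ofHom (Subtype.val) : E ⟶ X) (H.map r z) = z := by
      let u2 : X × ULift Bool ⟶ X := TypeCat.ofHom fun q => match q.2.down with
        | true => q.1
        | false => (r q.1).val
      have h1 : H.map (TypeCat.ofHom (fun x => (x, χ x)) : X ⟶ X × ULift Bool) z
          = H.map (TypeCat.ofHom (fun x => (x, ⟨true⟩)) : X ⟶ X × ULift Bool) z :=
        map_pair_ext H hprod _ _ z rfl hχ
      have c1 : (TypeCat.ofHom (fun x => u2 (x, χ x)) : X ⟶ X) = TypeCat.ofHom fun x => (r x).val := by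
        refine ConcreteCategory.hom_ext _ _ fun x => ?_
        by_cases h : f x = g x
        · simp only [χ, TypeCat.ofHom_apply, if_pos h, u2, r, dif_pos h]
        · simp only [χ, TypeCat.ofHom_apply, if_neg h, u2]
      calc H.map (TypeCat.ofHom (Subtype.val) : E ⟶ X) (H.map r z)
          = H.map (TypeCat.ofHom (fun x => (r x).val) : X ⟶ X) z := map_comp_apply' H r _ z
        _ = H.map (TypeCat.ofHom (fun x => u2 (x, χ x)) : X ⟶ X) z := by rw [c1]
        _ = H.map u2 (H.map (TypeCat.ofHom (fun x => (x, χ x)) : X ⟶ X × ULift Bool) z) :=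
            (map_comp_apply' H (TypeCat.ofHom fun x => (x, χ x)) u2 z).symm
        _ = H.map u2 (H.map (TypeCat.ofHom (fun x => (x, ⟨true⟩)) : X ⟶ X × ULift Bool) z) := by rw [h1]
        _ = H.map (TypeCat.ofHom (fun x => x) : X ⟶ X) z :=
            map_comp_apply' H (TypeCat.ofHom fun x => (x, ⟨true⟩)) u2 z
        _ = z := by
            have : (TypeCat.ofHom (fun x => x) : X ⟶ X) = 𝟙 X := rfl
            rw [this, FunctorToTypes.map_id_apply]
    refine ⟨H.map r z, key, ?_⟩
    intro e' he'
    have : H.map r (H.map (TypeCat.ofHom (Subtype.val) : E ⟶ X) e') = e' := by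
      rw [map_comp_apply' H (TypeCat.ofHom Subtype.val) r e']
      have : (TypeCat.ofHom (fun e => r e.val) : E ⟶ E) = 𝟙 E := ConcreteCategory.hom_ext _ _ hri
      rw [this, FunctorToTypes.map_id_apply]
    rw [← this, he']
  · exfalso
    apply hab
    apply tmap_eq_fmap_of_point H hone
      (w := H.map (TypeCat.ofHom (fun _ => PUnit.unit) : X ⟶ (PUnit : Type u)) z)
    show H.map (TypeCat.ofHom (fun _ => ULift.up true) : (PUnit : Type u) ⟶ ULift Bool) _
        = H.map (TypeCat.ofHom (fun _ => ULift.up false) : (PUnit : Type u) ⟶ ULift Bool) _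
    rw [← const_factor H (ULift.up true) z, ← const_factor H (ULift.up false) z, ← hχ]
    have : χ = (TypeCat.ofHom (fun _ => ⟨false⟩) : X ⟶ ULift Bool) :=
      ConcreteCategory.hom_ext _ _ fun x => if_neg (fun h => hEn ⟨⟨x, h⟩⟩)
    rw [this]

end CaseB


section Preservation

noncomputable def binaryFanIsLimit {P X Y : Type u} (p1 : P ⟶ X) (p2 : P ⟶ Y)
    (hb : Function.Bijective (fun z : P => (p1 z, p2 z))) :
    IsLimit (BinaryFan.mk p1 p2) := by
  refine BinaryFan.isLimitMk
    (fun s => TypeCat.ofHom fun t => (Equiv.ofBijective _ hb).symm (s.fst t, s.snd t)) ?_ ?_ ?_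
  · intro s
    refine ConcreteCategory.hom_ext _ _ fun t => ?_
    exact congrArg Prod.fst ((Equiv.ofBijective _ hb).apply_symm_apply (s.fst t, s.snd t))
  · intro s
    refine ConcreteCategory.hom_ext _ _ fun t => ?_
    exact congrArg Prod.snd ((Equiv.ofBijective _ hb).apply_symm_apply (s.fst t, s.snd t))
  · intro s m h1 h2
    refine ConcreteCategory.hom_ext _ _ fun t => ?_
    apply hb.injective
    show (p1 (m t), p2 (m t)) = _
    have e1 : p1 (m t) = s.fst t := ConcreteCategory.congr_hom h1 t
    have e2 : p2 (m t) = s.snd t := ConcreteCategory.congr_hom h2 t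
    rw [e1, e2]
    exact ((Equiv.ofBijective _ hb).apply_symm_apply (s.fst t, s.snd t)).symm

lemma preservesBinaryShape (hprod : ∀ X Y : Type u, Function.Bijective
      (fun z : H.obj (X × Y) =>
        (H.map (X := X × Y) (Y := X) (TypeCat.ofHom Prod.fst) z, H.map (X := X × Y) (Y := Y) (TypeCat.ofHom Prod.snd) z))) :
    PreservesLimitsOfShape (Discrete WalkingPair) H := by
  constructor
  intro K
  have : PreservesLimit (pair (K.obj ⟨WalkingPair.left⟩) (K.obj ⟨WalkingPair.right⟩)) H := by
    apply preservesLimit_of_preserves_limit_cone (Types.binaryProductLimit _ _)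
    exact (isLimitMapConeBinaryFanEquiv H (TypeCat.ofHom Prod.fst) (TypeCat.ofHom Prod.snd)).symm
      (binaryFanIsLimit (H.map (TypeCat.ofHom Prod.fst)) (H.map (TypeCat.ofHom Prod.snd)) (hprod _ _))
  exact preservesLimit_of_iso_diagram H (diagramIsoPair K).symm

lemma preservesTerminalShape
    (hone : Nonempty (H.obj PUnit) ∧ Subsingleton (H.obj PUnit)) :
    PreservesLimitsOfShape (Discrete PEmpty.{1}) H := by
  have : PreservesLimit (Functor.empty.{0} (Type u)) H := by
    apply preservesLimit_of_preserves_limit_cone Types.isTerminalPunit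
    exact (isLimitMapConeEmptyConeEquiv H PUnit).symm
      (IsTerminal.ofUniqueHom (fun X => TypeCat.ofHom fun _ => Classical.choice hone.1)
        (fun X m => ConcreteCategory.hom_ext _ _ fun x => @Subsingleton.elim _ hone.2 _ _))
  exact preservesLimitsOfShape_pempty_of_preservesTerminal H

lemma preservesEqualizerShape (hprod : ∀ X Y : Type u, Function.Bijective
      (fun z : H.obj (X × Y) =>
        (H.map (X := X × Y) (Y := X) (TypeCat.ofHom Prod.fst) z, H.map (X := X × Y) (Y := Y) (TypeCat.ofHom Prod.snd) z)))
    (hone : Nonempty (H.obj PUnit) ∧ Subsingleton (H.obj PUnit))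
    (hab : H.map (tmap) ≠ H.map (fmap)) :
    PreservesLimitsOfShape WalkingParallelPair H := by
  constructor
  intro K
  have : PreservesLimit (parallelPair (K.map WalkingParallelPairHom.left)
      (K.map WalkingParallelPairHom.right)) H := by
    have w : (TypeCat.ofHom Subtype.val : {x // K.map WalkingParallelPairHom.left x
          = K.map WalkingParallelPairHom.right x} ⟶ K.obj WalkingParallelPair.zero)
        ≫ K.map WalkingParallelPairHom.left
        = TypeCat.ofHom Subtype.val ≫ K.map WalkingParallelPairHom.right := ConcreteCategory.hom_ext _ _ fun x => x.prop
    apply preservesLimit_of_preserves_limit_cone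
      (Types.typeEqualizerOfUnique _ w
        (fun y hy => ⟨⟨y, hy⟩, rfl, fun x hx => Subtype.ext hx⟩))
    exact (isLimitMapConeForkEquiv H w).symm (Types.typeEqualizerOfUnique _ _
      (fun z hz => exists_unique_preimage H hprod hone hab _ _ z hz))
  exact preservesLimit_of_iso_diagram H (diagramIsoParallelPair K).symm

end Preservation

end Stmt17Aux


theorem stmt17 (H : Type u ⥤ Type u)
    (hprod : ∀ X Y : Type u, Function.Bijective
      (fun z : H.obj (X × Y) =>
        (H.map (X := X × Y) (Y := X) (TypeCat.ofHom Prod.fst) z, H.map (X := X × Y) (Y := Y) (TypeCat.ofHom Prod.snd) z)))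
    (hone : Nonempty (H.obj PUnit) ∧ Subsingleton (H.obj PUnit)) :
    Nonempty (PreservesFiniteLimits H) ∨ Nonempty (H ≅ C01) := by
  classical
  by_cases hab : H.map Stmt17Aux.tmap = H.map Stmt17Aux.fmap
  · have hsub : ∀ X : Type u, Subsingleton (H.obj X) := by
      intro X
      by_cases hX : Nonempty X
      · exact Stmt17Aux.subsingleton_of_nonempty H hprod hone hab hX
      · exact Stmt17Aux.subsingleton_of_isEmpty H hprod hone (not_nonempty_iff.mp hX)
    by_cases hE : Nonempty (H.obj (PEmpty : Type u))
    · left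
      have hne : ∀ X : Type u, Nonempty (H.obj X) := by
        intro X
        by_cases hX : Nonempty X
        · exact Stmt17Aux.nonempty_of_nonempty H hprod hone hX
        · have hX' : IsEmpty X := not_nonempty_iff.mp hX
          exact ⟨H.map (TypeCat.ofHom (fun e => e.elim) : (PEmpty : Type u) ⟶ X) (Classical.choice hE)⟩
      refine ⟨⟨fun J _ _ => ⟨fun {K} => ⟨fun {c} _ => ⟨?_⟩⟩⟩⟩⟩
      refine ⟨fun s => TypeCat.ofHom fun _ => Classical.choice (hne c.pt), ?_, ?_⟩
      · intro s j
        refine ConcreteCategory.hom_ext _ _ fun t => ?_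
        exact @Subsingleton.elim _ (hsub (K.obj j)) _ _
      · intro s m _
        refine ConcreteCategory.hom_ext _ _ fun t => ?_
        exact @Subsingleton.elim _ (hsub c.pt) _ _
    · right
      have hempty : ∀ X : Type u, IsEmpty X → IsEmpty (H.obj X) := by
        intro X hX
        constructor
        intro z
        exact hE ⟨H.map (TypeCat.ofHom (fun x => hX.elim x) : X ⟶ (PEmpty : Type u)) z⟩
      have hto : ∀ X : Type u, H.obj X → ULift.{u} (PLift (Nonempty X)) := by
        intro X z
        refine ⟨⟨?_⟩⟩
        by_contra h
        exact (hempty X (not_nonempty_iff.mp h)).false z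
      have hfrom : ∀ X : Type u, ULift.{u} (PLift (Nonempty X)) → H.obj X := by
        intro X h
        have x0 : X := Classical.choice h.down.down
        exact H.map (TypeCat.ofHom (fun _ => x0) : (PUnit : Type u) ⟶ X) (Classical.choice hone.1)
      refine ⟨NatIso.ofComponents (fun X => Equiv.toIso
        (@equivOfSubsingletonOfSubsingleton _ _ (hsub X)
          (inferInstanceAs (Subsingleton (ULift.{u} (PLift (Nonempty X)))))
          (hto X) (hfrom X))) ?_⟩
      intro X Y f
      refine ConcreteCategory.hom_ext _ _ fun z => ?_
      exact @Subsingleton.elim _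
        (inferInstanceAs (Subsingleton (ULift.{u} (PLift (Nonempty Y))))) _ _
  · left
    haveI := Stmt17Aux.preservesBinaryShape H hprod
    haveI := Stmt17Aux.preservesTerminalShape H hone
    haveI := Stmt17Aux.preservesEqualizerShape H hprod hone hab
    haveI : PreservesFiniteProducts H :=
      PreservesFiniteProducts.of_preserves_binary_and_terminal H
    exact ⟨preservesFiniteLimits_of_preservesEqualizers_and_finiteProducts H⟩
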